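/- Let A = (A_ij)_{1≤i,j≤3} be a positive semi-definite matrix with diagonal blocks A_11, A_22, A_33 square. Then there exist unitary matrices U, V of appropriate sizes such that conjugating A by the block diagonal unitary I ⊕ U ⊕ V yields a positive semi-definite matrix whose blocks in positions (1,2), (2,1), (2,3), (3,2) are all positive semi-definite, with the same trace norms blockwise as A. -/

import Mathlib

open Matrix ComplexOrder

/-- The trace norm of a rectangular complex matrix: `tr ((Xᴴ X)^{1/2})`,
which equals the sum of the singular values of `X`. -/
noncomputable def traceNorm {m n : ℕ} (X : Matrix (Fin m) (Fin n) ℂ) : ℝ :=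
  (((Matrix.posSemidef_conjTranspose_mul_self X).1.eigenvectorUnitary.1 *
    diagonal (((↑) : ℝ → ℂ) ∘ Real.sqrt ∘ (Matrix.posSemidef_conjTranspose_mul_self X).1.eigenvalues) *
    (star (Matrix.posSemidef_conjTranspose_mul_self X).1.eigenvectorUnitary : Matrix (Fin n) (Fin n) ℂ)).trace).re

/-- The `(i,j)` block of a `3 × 3` partitioned matrix with `n × n` blocks
(indexed as `Fin n × Fin 3`). -/
def blk {n : ℕ} (A : Matrix (Fin n × Fin 3) (Fin n × Fin 3) ℂ) (i j : Fin 3) :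
    Matrix (Fin n) (Fin n) ℂ :=
  Matrix.of fun r s => A (r, i) (s, j)

section Auxiliary

section SqrtPort

open scoped MatrixOrder

/-- The square root of a positive semi-definite matrix via the spectral theorem. -/
noncomputable def Matrix.PosSemidef.sqrt {n : ℕ} {A : Matrix (Fin n) (Fin n) ℂ}
    (hA : A.PosSemidef) : Matrix (Fin n) (Fin n) ℂ :=
  hA.1.eigenvectorUnitary.1 * diagonal (((↑) : ℝ → ℂ) ∘ Real.sqrt ∘ hA.1.eigenvalues) *
    (star hA.1.eigenvectorUnitary : Matrix (Fin n) (Fin n) ℂ)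

lemma Matrix.PosSemidef.sqrt_eq_cfc {n : ℕ} {A : Matrix (Fin n) (Fin n) ℂ}
    (hA : A.PosSemidef) : hA.sqrt = CFC.sqrt A := by
  rw [CFC.sqrt_eq_cfc, cfc_nnreal_eq_real _ A, hA.1.cfc_eq]
  simp only [IsHermitian.cfc, Matrix.PosSemidef.sqrt, Real.coe_sqrt, Real.coe_toNNReal',
    Unitary.conjStarAlgAut_apply]
  congr 3
  funext i
  simp [Real.sqrt_eq_zero', hA.eigenvalues_nonneg i]

lemma Matrix.PosSemidef.posSemidef_sqrt {n : ℕ} {A : Matrix (Fin n) (Fin n) ℂ}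
    (hA : A.PosSemidef) : hA.sqrt.PosSemidef := by
  rw [hA.sqrt_eq_cfc]
  exact Matrix.nonneg_iff_posSemidef.mp (CFC.sqrt_nonneg A)

lemma Matrix.PosSemidef.sqrt_mul_self {n : ℕ} {A : Matrix (Fin n) (Fin n) ℂ}
    (hA : A.PosSemidef) : hA.sqrt * hA.sqrt = A := by
  rw [hA.sqrt_eq_cfc]
  exact CFC.sqrt_mul_sqrt_self A (Matrix.nonneg_iff_posSemidef.mpr hA)

lemma Matrix.PosSemidef.eq_sqrt_of_sq_eq {n : ℕ} {B : Matrix (Fin n) (Fin n) ℂ}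
    (hB : B.PosSemidef) {A : Matrix (Fin n) (Fin n) ℂ} (hA : A.PosSemidef) (h : B ^ 2 = A) :
    B = hA.sqrt := by
  rw [hA.sqrt_eq_cfc]
  exact (CFC.sqrt_unique (by rw [← h, pow_two]) (Matrix.nonneg_iff_posSemidef.mpr hB)).symm

end SqrtPort

open Filter

/-- The square root of a unitary conjugate is the conjugate of the square root. -/
lemma sqrt_conj_aux {n : ℕ} (M : Matrix (Fin n) (Fin n) ℂ) (hM : M.PosSemidef)
    (C : Matrix (Fin n) (Fin n) ℂ) (hC : C ∈ Matrix.unitaryGroup (Fin n) ℂ) :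
    (hM.conjTranspose_mul_mul_same C).sqrt = Cᴴ * hM.sqrt * C := by
  refine ((hM.posSemidef_sqrt.conjTranspose_mul_mul_same C).eq_sqrt_of_sq_eq _ ?_).symm
  have h1 : C * Cᴴ = 1 := by
    simpa [star_eq_conjTranspose] using (Matrix.mem_unitaryGroup_iff.mp hC)
  have := hM.sqrt_mul_self
  rw [pow_two]
  calc Cᴴ * hM.sqrt * C * (Cᴴ * hM.sqrt * C)
      = Cᴴ * hM.sqrt * (C * Cᴴ) * (hM.sqrt * C) := by
        simp only [Matrix.mul_assoc]
    _ = Cᴴ * M * C := by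
        rw [h1, Matrix.mul_one]
        simp only [Matrix.mul_assoc, ← Matrix.mul_assoc hM.sqrt hM.sqrt, this]

lemma traceNorm_key_aux {n : ℕ} (X B C : Matrix (Fin n) (Fin n) ℂ)
    (hB : B ∈ Matrix.unitaryGroup (Fin n) ℂ) :
    (B * X * C)ᴴ * (B * X * C) = Cᴴ * (Xᴴ * X) * C := by
  have h1 : Bᴴ * B = 1 := by
    simpa [star_eq_conjTranspose] using (Matrix.mem_unitaryGroup_iff'.mp hB)
  simp only [Matrix.conjTranspose_mul, Matrix.mul_assoc]
  rw [← Matrix.mul_assoc Bᴴ B, h1, Matrix.one_mul]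

lemma sqrt_congr_aux {n : ℕ} {M N : Matrix (Fin n) (Fin n) ℂ} (h : M = N)
    (hM : M.PosSemidef) (hN : N.PosSemidef) : hM.sqrt = hN.sqrt := by subst h; rfl

/-- The trace norm is invariant under left and right multiplication by unitaries. -/
lemma traceNorm_unitary_conj_aux {n : ℕ} (X B C : Matrix (Fin n) (Fin n) ℂ)
    (hB : B ∈ Matrix.unitaryGroup (Fin n) ℂ) (hC : C ∈ Matrix.unitaryGroup (Fin n) ℂ) :
    traceNorm (B * X * C) = traceNorm X := by
  unfold traceNorm
  show ((Matrix.posSemidef_conjTranspose_mul_self (B * X * C)).sqrt.trace).re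
    = ((Matrix.posSemidef_conjTranspose_mul_self X).sqrt.trace).re
  have h2 : (Matrix.posSemidef_conjTranspose_mul_self (B * X * C)).sqrt
      = Cᴴ * (Matrix.posSemidef_conjTranspose_mul_self X).sqrt * C := by
    rw [sqrt_congr_aux (traceNorm_key_aux X B C hB) _
      ((Matrix.posSemidef_conjTranspose_mul_self X).conjTranspose_mul_mul_same C)]
    exact sqrt_conj_aux _ _ C hC
  rw [h2, Matrix.trace_mul_cycle]
  have h1 : C * Cᴴ = 1 := by
    simpa [star_eq_conjTranspose] using (Matrix.mem_unitaryGroup_iff.mp hC)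
  rw [h1, Matrix.one_mul]

/-- Polar decomposition for invertible matrices. -/
lemma polar_invertible_aux {n : ℕ} (X : Matrix (Fin n) (Fin n) ℂ) (hX : IsUnit X.det) :
    ∃ U ∈ Matrix.unitaryGroup (Fin n) ℂ, (X * Uᴴ).PosSemidef := by
  have hP := Matrix.posSemidef_self_mul_conjTranspose X
  set P := hP.sqrt with hPdef
  have hPP : P * P = X * Xᴴ := hP.sqrt_mul_self
  have hPH : Pᴴ = P := hP.posSemidef_sqrt.1
  have hPdet : IsUnit P.det := by
    have : P.det * P.det = X.det * star X.det := by
      rw [← Matrix.det_mul, hPP, Matrix.det_mul, Matrix.det_conjTranspose]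
    have h2 : IsUnit (P.det * P.det) := this ▸ hX.mul hX.star
    exact isUnit_of_mul_isUnit_left h2
  refine ⟨P⁻¹ * X, ?_, ?_⟩
  · rw [Matrix.mem_unitaryGroup_iff]
    have : star (P⁻¹ * X) = Xᴴ * P⁻¹ := by
      rw [star_eq_conjTranspose, Matrix.conjTranspose_mul, Matrix.conjTranspose_nonsing_inv, hPH]
    rw [this, Matrix.mul_assoc, ← Matrix.mul_assoc X, ← hPP]
    rw [show P * P * P⁻¹ = P from by
      rw [Matrix.mul_assoc, Matrix.mul_nonsing_inv _ hPdet, Matrix.mul_one]]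
    exact Matrix.nonsing_inv_mul _ hPdet
  · have : (P⁻¹ * X)ᴴ = Xᴴ * P⁻¹ := by
      rw [Matrix.conjTranspose_mul, Matrix.conjTranspose_nonsing_inv, hPH]
    rw [this, ← Matrix.mul_assoc, ← hPP, Matrix.mul_assoc, Matrix.mul_nonsing_inv _ hPdet,
      Matrix.mul_one]
    exact hP.posSemidef_sqrt

lemma isClosed_posSemidef_aux {n : ℕ} :
    IsClosed {A : Matrix (Fin n) (Fin n) ℂ | A.PosSemidef} := by
  have : {A : Matrix (Fin n) (Fin n) ℂ | A.PosSemidef}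
      = {A | Aᴴ = A} ∩ ⋂ x : Fin n → ℂ, {A | 0 ≤ star x ⬝ᵥ A *ᵥ x} := by
    ext A
    simp only [Set.mem_setOf_eq, Set.mem_inter_iff, Set.mem_iInter]
    exact ⟨fun h => ⟨(posSemidef_iff_dotProduct_mulVec.mp h).1, (posSemidef_iff_dotProduct_mulVec.mp h).2⟩, fun h => posSemidef_iff_dotProduct_mulVec.mpr ⟨h.1, h.2⟩⟩
  rw [this]
  refine IsClosed.inter (isClosed_eq (continuous_id.matrix_conjTranspose) continuous_id)
    (isClosed_iInter fun x => ?_)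
  have hc : Continuous fun A : Matrix (Fin n) (Fin n) ℂ => star x ⬝ᵥ A *ᵥ x :=
    (continuous_const.dotProduct (continuous_id.matrix_mulVec continuous_const))
  have hcl : IsClosed {z : ℂ | 0 ≤ z} := by
    have : {z : ℂ | 0 ≤ z} = Complex.re ⁻¹' Set.Ici 0 ∩ Complex.im ⁻¹' {0} := by
      ext z
      simp [Complex.le_def, eq_comm]
    rw [this]
    exact (isClosed_Ici.preimage Complex.continuous_re).inter
      (isClosed_singleton.preimage Complex.continuous_im)
  exact hcl.preimage hc

lemma isCompact_unitaryGroup_aux {n : ℕ} :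
    IsCompact (Matrix.unitaryGroup (Fin n) ℂ : Set (Matrix (Fin n) (Fin n) ℂ)) := by
  have hclosed : IsClosed (Matrix.unitaryGroup (Fin n) ℂ : Set (Matrix (Fin n) (Fin n) ℂ)) := by
    have : (Matrix.unitaryGroup (Fin n) ℂ : Set (Matrix (Fin n) (Fin n) ℂ))
        = {U | U * Uᴴ = 1} := by
      ext U
      rw [Set.mem_setOf_eq, ← star_eq_conjTranspose]
      exact Matrix.mem_unitaryGroup_iff
    rw [this]
    exact isClosed_eq (continuous_id.mul continuous_id.matrix_conjTranspose) continuous_const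
  have hsub : (Matrix.unitaryGroup (Fin n) ℂ : Set (Matrix (Fin n) (Fin n) ℂ))
      ⊆ Set.univ.pi fun _ : Fin n => Set.univ.pi fun _ : Fin n => Metric.closedBall (0:ℂ) 1 := by
    intro U hU i _ j _
    have h1 : (U * Uᴴ) i i = 1 := by
      rw [show U * Uᴴ = 1 from by
        rw [← star_eq_conjTranspose]; exact Matrix.mem_unitaryGroup_iff.mp hU]
      simp
    have h2 : ∑ k, Complex.normSq (U i k) = 1 := by
      simp only [Matrix.mul_apply, Matrix.conjTranspose_apply] at h1
      have : (∑ k, (Complex.normSq (U i k) : ℂ)) = 1 := by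
        rw [← h1]
        exact Finset.sum_congr rfl fun k _ => by rw [← Complex.mul_conj]; rfl
      exact_mod_cast this
    have h3 : Complex.normSq (U i j) ≤ 1 := by
      rw [← h2]
      exact Finset.single_le_sum (fun k _ => Complex.normSq_nonneg _) (Finset.mem_univ j)
    simp only [Metric.mem_closedBall, Complex.dist_eq, sub_zero]
    rw [Complex.norm_def]
    exact Real.sqrt_le_one.mpr h3
  exact IsCompact.of_isClosed_subset
    (isCompact_univ_pi fun _ => isCompact_univ_pi fun _ => isCompact_closedBall _ _)
    hclosed hsub

/-- Polar decomposition for arbitrary square complex matrices: there is a unitary `U`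
with `X Uᴴ` positive semi-definite. -/
lemma polar_aux {n : ℕ} (X : Matrix (Fin n) (Fin n) ℂ) :
    ∃ U ∈ Matrix.unitaryGroup (Fin n) ℂ, (X * Uᴴ).PosSemidef := by
  have hspec : {t : ℂ | ¬ IsUnit (X - t • 1).det}.Finite := by
    refine (X.finite_spectrum).subset ?_
    intro t ht
    rw [Set.mem_setOf_eq, ← Matrix.isUnit_iff_isUnit_det] at ht
    rw [spectrum.mem_iff]
    intro hu
    exact ht (by simpa [Algebra.algebraMap_eq_smul_one, neg_sub] using hu.neg)
  set a : ℕ → ℂ := fun k => ((k : ℂ) + 1)⁻¹ with ha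
  have ha_inj : Function.Injective a := by
    intro k l h
    have h2 : ((k : ℂ) + 1) = ((l : ℂ) + 1) := inv_injective h
    have h3 : (k : ℂ) = (l : ℂ) := by linear_combination h2
    exact_mod_cast h3
  have ha_tendsto : Tendsto a atTop (nhds (0 : ℂ)) := by
    have h1 : Tendsto (fun k : ℕ => ((k : ℝ) + 1)⁻¹) atTop (nhds 0) :=
      tendsto_one_div_add_atTop_nhds_zero_nat.congr (by intro k; rw [one_div])
    have := (Complex.continuous_ofReal.tendsto 0).comp h1
    simpa [ha, Function.comp_def] using this
  have hbadfin : {k : ℕ | a k ∈ {t : ℂ | ¬ IsUnit (X - t • 1).det}}.Finite :=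
    hspec.preimage ha_inj.injOn
  obtain ⟨N, hN⟩ := hbadfin.bddAbove
  have hgood : ∀ k, IsUnit (X - a (k + N + 1) • 1).det := by
    intro k
    by_contra hbad
    have := hN (show k + N + 1 ∈ _ from hbad)
    omega
  choose U hU hPSD using fun k => polar_invertible_aux (X - a (k + N + 1) • 1) (hgood k)
  haveI : FirstCountableTopology (Matrix (Fin n) (Fin n) ℂ) :=
    inferInstanceAs (FirstCountableTopology (Fin n → Fin n → ℂ))
  obtain ⟨V, hV, φ, hφ, hlim⟩ := isCompact_unitaryGroup_aux.tendsto_subseq hU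
  refine ⟨V, hV, ?_⟩
  have hXlim : Tendsto (fun k => X - a (φ k + N + 1) • 1) atTop (nhds X) := by
    have h0 : Tendsto (fun k => a (φ k + N + 1)) atTop (nhds 0) :=
      ha_tendsto.comp ((tendsto_atTop_atTop.mpr (fun b => ⟨b, fun k hk => le_trans hk
        (by have : k ≤ φ k := hφ.le_apply; omega)⟩)))
    have : Tendsto (fun k => a (φ k + N + 1) • (1 : Matrix (Fin n) (Fin n) ℂ)) atTop
        (nhds ((0 : ℂ) • 1)) := h0.smul tendsto_const_nhds
    simpa using tendsto_const_nhds.sub this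
  have hmul : Tendsto (fun k => (X - a (φ k + N + 1) • 1) * (U (φ k))ᴴ) atTop
      (nhds (X * Vᴴ)) := by
    have hconj : Tendsto (fun k => (U (φ k))ᴴ) atTop (nhds Vᴴ) :=
      ((continuous_id.matrix_conjTranspose).tendsto V).comp hlim
    exact hXlim.mul hconj
  exact isClosed_posSemidef_aux.mem_of_tendsto hmul
    (Filter.Eventually.of_forall fun k => hPSD (φ k))

lemma blk_blockDiagonal_mul {n : ℕ} (M : Fin 3 → Matrix (Fin n) (Fin n) ℂ)
    (A : Matrix (Fin n × Fin 3) (Fin n × Fin 3) ℂ) (i j : Fin 3) :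
    blk (Matrix.blockDiagonal M * A) i j = M i * blk A i j := by
  ext r s
  simp only [blk, Matrix.of_apply, Matrix.mul_apply, Fintype.sum_prod_type,
    Matrix.blockDiagonal_apply, ite_mul, zero_mul]
  simp

lemma blk_mul_blockDiagonal {n : ℕ} (M : Fin 3 → Matrix (Fin n) (Fin n) ℂ)
    (A : Matrix (Fin n × Fin 3) (Fin n × Fin 3) ℂ) (i j : Fin 3) :
    blk (A * Matrix.blockDiagonal M) i j = blk A i j * M j := by
  ext r s
  simp only [blk, Matrix.of_apply, Matrix.mul_apply, Fintype.sum_prod_type,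
    Matrix.blockDiagonal_apply, mul_ite, mul_zero]
  simp [eq_comm]

lemma blk_conj {n : ℕ} (M : Fin 3 → Matrix (Fin n) (Fin n) ℂ)
    (A : Matrix (Fin n × Fin 3) (Fin n × Fin 3) ℂ) (i j : Fin 3) :
    blk (Matrix.blockDiagonal M * A * (Matrix.blockDiagonal M)ᴴ) i j
      = M i * blk A i j * (M j)ᴴ := by
  rw [show (Matrix.blockDiagonal M)ᴴ = Matrix.blockDiagonal (fun k => (M k)ᴴ) from
    (Matrix.blockDiagonal_conjTranspose M)]
  rw [blk_mul_blockDiagonal, blk_blockDiagonal_mul]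

lemma blk_conjTranspose {n : ℕ} {A : Matrix (Fin n × Fin 3) (Fin n × Fin 3) ℂ}
    (h : Aᴴ = A) (i j : Fin 3) : (blk A i j)ᴴ = blk A j i := by
  ext r s
  simp only [blk, Matrix.conjTranspose_apply, Matrix.of_apply]
  rw [show A (s, i) (r, j) = Aᴴ (s, i) (r, j) from by rw [h]]
  simp [Matrix.conjTranspose_apply]

end Auxiliary

/-- The reduction step in the proof of Theorem 1: conjugating a partitioned positive
semi-definite matrix by a block-diagonal unitary `I ⊕ U ⊕ V` so that the resulting
matrix is positive semi-definite, its `(1,2), (2,1), (2,3), (3,2)` blocks are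
positive semi-definite, and all blocks have the same trace norms as those of `A`. -/
theorem exists_blockDiagonal_unitary_conj {n : ℕ}
    (A : Matrix (Fin n × Fin 3) (Fin n × Fin 3) ℂ) (hA : A.PosSemidef) :
    ∃ U V : Matrix (Fin n) (Fin n) ℂ,
      U ∈ Matrix.unitaryGroup (Fin n) ℂ ∧ V ∈ Matrix.unitaryGroup (Fin n) ℂ ∧
      ∀ W : Matrix (Fin n × Fin 3) (Fin n × Fin 3) ℂ,
        W = Matrix.blockDiagonal ![(1 : Matrix (Fin n) (Fin n) ℂ), U, V] →
        (W * A * Wᴴ).PosSemidef ∧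
        (blk (W * A * Wᴴ) 0 1).PosSemidef ∧ (blk (W * A * Wᴴ) 1 0).PosSemidef ∧
        (blk (W * A * Wᴴ) 1 2).PosSemidef ∧ (blk (W * A * Wᴴ) 2 1).PosSemidef ∧
        ∀ i j : Fin 3, traceNorm (blk (W * A * Wᴴ) i j) = traceNorm (blk A i j) := by
  have hAH : Aᴴ = A := hA.1
  -- choose U by polar decomposition of the (0,1) block, transposed appropriately:
  -- we want (blk A 0 1 * Uᴴ) PSD for a unitary U
  obtain ⟨U, hU, hU01⟩ := polar_aux (blk A 0 1)
  -- choose V so that (U * blk A 1 2 * Vᴴ) is PSD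
  obtain ⟨V, hV, hV12⟩ := polar_aux (U * blk A 1 2)
  refine ⟨U, V, hU, hV, ?_⟩
  intro W hW
  set M : Fin 3 → Matrix (Fin n) (Fin n) ℂ := ![1, U, V] with hM
  have hM0 : M 0 = 1 := rfl
  have hM1 : M 1 = U := rfl
  have hM2 : M 2 = V := rfl
  have hMmem : ∀ i, M i ∈ Matrix.unitaryGroup (Fin n) ℂ := by
    intro i
    fin_cases i
    · exact one_mem _
    · exact hU
    · exact hV
  have hblk : ∀ i j, blk (W * A * Wᴴ) i j = M i * blk A i j * (M j)ᴴ := by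
    intro i j
    rw [hW]
    exact blk_conj M A i j
  refine ⟨hW ▸ hA.mul_mul_conjTranspose_same W, ?_, ?_, ?_, ?_, ?_⟩
  · rw [hblk, hM0, hM1, Matrix.one_mul]
    exact hU01
  · rw [hblk, hM0, hM1, Matrix.conjTranspose_one, Matrix.mul_one]
    have : U * blk A 1 0 = (blk A 0 1 * Uᴴ)ᴴ := by
      rw [Matrix.conjTranspose_mul, Matrix.conjTranspose_conjTranspose,
        blk_conjTranspose hAH]
    rw [this, hU01.1]
    exact hU01
  · rw [hblk, hM1, hM2]
    exact hV12
  · rw [hblk, hM1, hM2]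
    have : V * blk A 2 1 * Uᴴ = (U * blk A 1 2 * Vᴴ)ᴴ := by
      simp only [Matrix.conjTranspose_mul, Matrix.conjTranspose_conjTranspose,
        blk_conjTranspose hAH, Matrix.mul_assoc]
    rw [this, hV12.1]
    exact hV12
  · intro i j
    rw [hblk]
    exact traceNorm_unitary_conj_aux (blk A i j) (M i) ((M j)ᴴ) (hMmem i)
      (by simpa [star_eq_conjTranspose] using Unitary.star_mem (hMmem j))
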